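/- Let a_1,...,a_{n+1} ∈ ℝ^n be affinely independent, let β = Σ_{i=1}^{n+1} λ_i a_i for a probability vector λ with all λ_i > 0, and let c ∈ ℝ^{n+1}_{++}. Then the signomial f(x) = Σ_{i=1}^{n+1} c_i exp(a_iᵀ x) − b·exp(βᵀ x) is nonnegative on ℝ^n if and only if b ≤ Π_{i=1}^{n+1} (c_i/λ_i)^{λ_i}. -/

import Mathlib

theorem stmt_15 (n : ℕ) (a : Fin (n + 1) → (Fin n → ℝ))
    (hind : AffineIndependent ℝ a)
    (lam : Fin (n + 1) → ℝ) (hlam : ∀ i, 0 < lam i) (hlam1 : ∑ i, lam i = 1)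
    (β : Fin n → ℝ) (hβ : β = ∑ i, lam i • a i)
    (c : Fin (n + 1) → ℝ) (hc : ∀ i, 0 < c i) (b : ℝ) :
    (∀ x : Fin n → ℝ,
        0 ≤ (∑ i, c i * Real.exp (∑ j, a i j * x j)) - b * Real.exp (∑ j, β j * x j)) ↔
    b ≤ ∏ i, (c i / lam i) ^ (lam i) := by
  set P : ℝ := ∏ i, (c i / lam i) ^ (lam i) with hPdef
  have hP : 0 < P :=
    Finset.prod_pos fun i _ => Real.rpow_pos_of_pos (div_pos (hc i) (hlam i)) _
  -- key identity for β·x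
  have hβx : ∀ x : Fin n → ℝ,
      (∑ j, β j * x j) = ∑ i, lam i * (∑ j, a i j * x j) := by
    intro x
    subst hβ
    simp only [Finset.sum_apply, Pi.smul_apply, smul_eq_mul, Finset.sum_mul, Finset.mul_sum]
    rw [Finset.sum_comm]
    exact Finset.sum_congr rfl fun i _ => Finset.sum_congr rfl fun j _ => mul_assoc _ _ _
  constructor
  · -- forward direction: construct the equality point
    intro h
    set w : Fin (n + 1) → ℝ := fun i => Real.log (lam i / c i) with hw
    obtain ⟨z, hz⟩ : ∃ z : Fin (n + 1) → ℝ,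
        ∀ i, (∑ j, a i j * z j.castSucc) + z (Fin.last n) = w i := by
      set M : Matrix (Fin (n + 1)) (Fin (n + 1)) ℝ := fun i => Fin.snoc (a i) 1 with hM
      have hli : LinearIndependent ℝ (fun i => M i) := by
        rw [linearIndependent_iff']
        intro s g hg i hi
        have h1 : ∑ e ∈ s, g e = 0 := by
          have := congrFun hg (Fin.last n)
          simpa [M, Finset.sum_apply] using this
        have h2 : ∑ e ∈ s, g e • a e = 0 := by
          funext j
          have := congrFun hg (Fin.castSucc j)
          simpa [M, Finset.sum_apply] using this
        exact affineIndependent_iff.1 hind s g h1 h2 i hi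
      obtain ⟨z, hzz⟩ :=
        (Matrix.mulVec_surjective_iff_isUnit.2
          (Matrix.linearIndependent_rows_iff_isUnit.1 hli)) w
      refine ⟨z, fun i => ?_⟩
      have := congrFun hzz i
      simp only [Matrix.mulVec, dotProduct] at this
      rw [Fin.sum_univ_castSucc] at this
      simpa [M] using this
    set x : Fin n → ℝ := fun j => z j.castSucc with hx
    set t : ℝ := z (Fin.last n) with ht
    have hax : ∀ i, (∑ j, a i j * x j) = w i - t := by
      intro i; have := hz i; simp only [hx, ht]; linarith
    have hsum : (∑ i, c i * Real.exp (∑ j, a i j * x j)) = Real.exp (-t) := by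
      have key : ∀ i : Fin (n + 1), c i * Real.exp (∑ j, a i j * x j)
          = lam i * Real.exp (-t) := by
        intro i
        rw [hax i, hw, sub_eq_add_neg, Real.exp_add,
          Real.exp_log (div_pos (hlam i) (hc i))]
        field_simp [(hc i).ne']
      rw [Finset.sum_congr rfl fun i _ => key i, ← Finset.sum_mul, hlam1, one_mul]
    have hPinv : P⁻¹ = Real.exp (∑ i, lam i * w i) := by
      rw [hPdef, ← Finset.prod_inv_distrib, Real.exp_sum]
      refine Finset.prod_congr rfl fun i _ => ?_
      rw [← Real.inv_rpow (div_pos (hc i) (hlam i)).le, inv_div,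
        Real.rpow_def_of_pos (div_pos (hlam i) (hc i)), hw, mul_comm]
    have hexpβ : Real.exp (∑ j, β j * x j) = P⁻¹ * Real.exp (-t) := by
      rw [hβx x]
      have h1 : (∑ i, lam i * (∑ j, a i j * x j)) = (∑ i, lam i * w i) - t := by
        rw [Finset.sum_congr rfl fun i _ => by rw [hax i, mul_sub],
          Finset.sum_sub_distrib, ← Finset.sum_mul, hlam1, one_mul]
      rw [h1, sub_eq_add_neg, Real.exp_add, hPinv]
    have key := h x
    rw [hsum, hexpβ] at key
    have hE : (0:ℝ) < Real.exp (-t) := Real.exp_pos _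
    have hb1 : b * P⁻¹ ≤ 1 := by
      have h2 : (b * P⁻¹) * Real.exp (-t) ≤ 1 * Real.exp (-t) := by
        rw [one_mul]; nlinarith
      exact le_of_mul_le_mul_right h2 hE
    calc b = b * P⁻¹ * P := by field_simp
    _ ≤ 1 * P := mul_le_mul_of_nonneg_right hb1 hP.le
    _ = P := one_mul P
  · -- reverse direction: AM-GM
    intro hb x
    have amgm := Real.geom_mean_le_arith_mean_weighted Finset.univ lam
      (fun i => (c i / lam i) * Real.exp (∑ j, a i j * x j))
      (fun i _ => (hlam i).le) hlam1
      (fun i _ => le_of_lt (mul_pos (div_pos (hc i) (hlam i)) (Real.exp_pos _)))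
    have hRHS : (∑ i, lam i * ((c i / lam i) * Real.exp (∑ j, a i j * x j)))
        = ∑ i, c i * Real.exp (∑ j, a i j * x j) :=
      Finset.sum_congr rfl fun i _ => by
        field_simp [(hlam i).ne']
    have hLHS : (∏ i, ((c i / lam i) * Real.exp (∑ j, a i j * x j)) ^ lam i)
        = P * Real.exp (∑ j, β j * x j) := by
      rw [hβx x, Real.exp_sum, hPdef, ← Finset.prod_mul_distrib]
      refine Finset.prod_congr rfl fun i _ => ?_
      rw [Real.mul_rpow (div_pos (hc i) (hlam i)).le (Real.exp_pos _).le]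
      congr 1
      rw [← Real.exp_mul, mul_comm]
    rw [hRHS, hLHS] at amgm
    have hbb : b * Real.exp (∑ j, β j * x j) ≤ P * Real.exp (∑ j, β j * x j) :=
      mul_le_mul_of_nonneg_right hb (Real.exp_pos _).le
    linarith
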